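/- Let $n$ and $m$ be integers with $0 < m < n$. The map sending a fraction $h/k$ to $(k-h)/k$ (i.e., sending a rational $q$ to $1-q$) is an order-reversing bijection from the Farey subsequence $\mathcal{F}(\mathbb{B}(n),m)$ onto the Farey subsequence $\mathcal{F}(\mathbb{B}(n),n-m)$. -/
import Mathlib


/-- The Farey subsequence `𝓕(𝔹(n), m)`: rationals `q` with `0 ≤ q ≤ 1` whose
reduced fraction `h/k` satisfies `k ≤ n`, `h ≤ m` and `k - h ≤ n - m`. -/
def fareyB (n m : ℕ) : Set ℚ :=
  {q : ℚ | 0 ≤ q ∧ q ≤ 1 ∧ q.den ≤ n ∧ q.num ≤ (m : ℤ) ∧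
    (q.den : ℤ) - q.num ≤ (n : ℤ) - (m : ℤ)}

lemma one_sub_num_den (q : ℚ) :
    (1 - q).num = (q.den : ℤ) - q.num ∧ (1 - q).den = q.den := by
  have hd : (0 : ℤ) < (q.den : ℤ) := by exact_mod_cast q.pos
  have hcop0 : IsCoprime q.num (q.den : ℤ) := by
    rw [Int.isCoprime_iff_gcd_eq_one]
    exact q.reduced
  have hcop1 : IsCoprime ((q.den : ℤ) - q.num) (q.den : ℤ) := by
    have := (hcop0.neg_left).add_mul_left_left 1
    simpa [neg_add_eq_sub] using this
  have hcop : Nat.Coprime ((q.den : ℤ) - q.num).natAbs ((q.den : ℤ)).natAbs := by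
    rwa [Int.isCoprime_iff_gcd_eq_one] at hcop1
  have heq : 1 - q = (((q.den : ℤ) - q.num : ℤ) : ℚ) / ((q.den : ℤ) : ℚ) := by
    have hne : ((q.den : ℚ)) ≠ 0 := by exact_mod_cast q.den_nz
    rw [eq_div_iff (by exact_mod_cast hne)]
    push_cast
    rw [sub_mul, one_mul, Rat.mul_den_eq_num]
  constructor
  · rw [heq, Rat.num_div_eq_of_coprime hd hcop]
  · have := Rat.den_div_eq_of_coprime hd hcop
    rw [heq]
    exact_mod_cast this

lemma one_sub_mem (n m : ℕ) (hm : 0 < m) (hmn : m < n) {q : ℚ}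
    (hq : q ∈ fareyB n m) : 1 - q ∈ fareyB n (n - m) := by
  obtain ⟨h0, h1, hden, hnum, hsub⟩ := hq
  obtain ⟨hN, hD⟩ := one_sub_num_den q
  have hc : ((n - m : ℕ) : ℤ) = (n : ℤ) - m := by
    rw [Nat.cast_sub hmn.le]
  refine ⟨by linarith, by linarith, by rwa [hD], ?_, ?_⟩
  · rw [hN, hc]; linarith
  · rw [hN, hD, hc]; linarith

theorem farey_boolean_complement_bijection (n m : ℕ) (hm : 0 < m) (hmn : m < n) :
    Set.BijOn (fun q : ℚ => 1 - q) (fareyB n m) (fareyB n (n - m)) ∧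
    StrictAntiOn (fun q : ℚ => 1 - q) (fareyB n m) := by
  have hm' : 0 < n - m := by omega
  have hmn' : n - m < n := by omega
  have hc : n - (n - m) = m := by omega
  constructor
  · refine ⟨fun q hq => one_sub_mem n m hm hmn hq, ?_, ?_⟩
    · intro a _ b _ hab
      simpa using hab
    · intro r hr
      refine ⟨1 - r, ?_, by simp⟩
      have := one_sub_mem n (n - m) hm' hmn' hr
      rwa [hc] at this
  · intro a _ b _ hab
    simpa using hab
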